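/- Let $r$ be a positive integer, $a > 0$, and let $F$ be the distribution function on $\mathbb{R}$ given by $F(x) = 0$ for $x < -a$, $F(x) = \tfrac{1}{2a^{2r+1}}(x^{2r+1} + a^{2r+1})$ for $-a \le x < a$, and $F(x) = 1$ for $x \ge a$. Then $F(a/2) = \tfrac12 + \tfrac{1}{2^{2r+2}} < \tfrac23$, and consequently $F$ is not 3-completely mixable: there do not exist random variables $X_1, X_2, X_3$, each distributed according to $F$, with $X_1 + X_2 + X_3$ almost surely constant. -/

import Mathlib

open MeasureTheory

private lemma keyA' {Ω : Type} [MeasurableSpace Ω] {μ : Measure Ω} {a C : ℝ}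
    {X Y Z : Ω → ℝ}
    (hA : μ ({ω | a / 2 < X ω} ∩ {ω | a / 2 < Y ω}) ≠ 0)
    (hZ : μ {ω | Z ω < -a} = 0)
    (hT : μ {ω | X ω + Y ω + Z ω = C}ᶜ = 0) : 0 < C := by
  have hs : μ (({ω | a / 2 < X ω} ∩ {ω | a / 2 < Y ω}) \
      ({ω | X ω + Y ω + Z ω = C}ᶜ ∪ {ω | Z ω < -a})) ≠ 0 := by
    rw [measure_diff_null (measure_union_null hT hZ)]
    exact hA
  obtain ⟨ω, hω⟩ := nonempty_of_measure_ne_zero hs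
  obtain ⟨⟨h1, h2⟩, h3⟩ := hω
  simp only [Set.mem_union, Set.mem_compl_iff, Set.mem_setOf_eq, not_or, not_not,
    not_lt] at h3 h1 h2
  obtain ⟨hsum, hz⟩ := h3
  linarith

private lemma keyB' {Ω : Type} [MeasurableSpace Ω] {μ : Measure Ω} {a C : ℝ}
    {X Y Z : Ω → ℝ}
    (hB : μ ({ω | X ω ≤ -a / 2} ∩ {ω | Y ω ≤ -a / 2}) ≠ 0)
    (hZ : μ {ω | a < Z ω} = 0)
    (hT : μ {ω | X ω + Y ω + Z ω = C}ᶜ = 0) : C ≤ 0 := by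
  have hs : μ (({ω | X ω ≤ -a / 2} ∩ {ω | Y ω ≤ -a / 2}) \
      ({ω | X ω + Y ω + Z ω = C}ᶜ ∪ {ω | a < Z ω})) ≠ 0 := by
    rw [measure_diff_null (measure_union_null hT hZ)]
    exact hB
  obtain ⟨ω, hω⟩ := nonempty_of_measure_ne_zero hs
  obtain ⟨⟨h1, h2⟩, h3⟩ := hω
  simp only [Set.mem_union, Set.mem_compl_iff, Set.mem_setOf_eq, not_or, not_not,
    not_lt] at h3 h1 h2
  obtain ⟨hsum, hz⟩ := h3
  linarith

private lemma pairPos' {Ω : Type} [MeasurableSpace Ω] (μ : Measure Ω) [IsProbabilityMeasure μ]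
    (A0 A1 A2 : Set Ω) (h1 : MeasurableSet A1) (h2 : MeasurableSet A2)
    (hq : 1 < μ A0 + μ A1 + μ A2) :
    μ (A0 ∩ A1) ≠ 0 ∨ μ (A0 ∩ A2) ≠ 0 ∨ μ (A1 ∩ A2) ≠ 0 := by
  by_contra h
  push_neg at h
  obtain ⟨h01, h02, h12⟩ := h
  have e1 : μ (A0 ∪ A1) = μ A0 + μ A1 := by
    have := measure_union_add_inter A0 h1 (μ := μ)
    rw [h01, add_zero] at this; exact this
  have e2 : μ ((A0 ∪ A1) ∪ A2) = μ A0 + μ A1 + μ A2 := by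
    have h' : μ ((A0 ∪ A1) ∩ A2) = 0 := by
      have hsub : (A0 ∪ A1) ∩ A2 ⊆ (A0 ∩ A2) ∪ (A1 ∩ A2) := by
        intro x hx
        rcases hx.1 with h | h
        · exact Or.inl ⟨h, hx.2⟩
        · exact Or.inr ⟨h, hx.2⟩
      exact measure_mono_null hsub (measure_union_null h02 h12)
    have := measure_union_add_inter (A0 ∪ A1) h2 (μ := μ)
    rw [h', add_zero, e1] at this; exact this
  have hle : μ ((A0 ∪ A1) ∪ A2) ≤ 1 := prob_le_one
  rw [e2] at hle
  exact absurd (lt_of_lt_of_le hq hle) (lt_irrefl _)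

/-- Example 2.3: the bimodal symmetric distribution with `F(x) = (x^(2r+1)+a^(2r+1))/(2a^(2r+1))`
on `[-a,a)` satisfies `F(a/2) = 1/2 + 2^{-(2r+2)} < 2/3` and is not 3-completely mixable. -/
theorem stmt4 (r : ℕ) (hr : 1 ≤ r) (a : ℝ) (ha : 0 < a) (F : ℝ → ℝ)
    (hF : ∀ x : ℝ, F x =
      if x < -a then 0
      else if x < a then (x ^ (2 * r + 1) + a ^ (2 * r + 1)) / (2 * a ^ (2 * r + 1))
      else 1) :
    F (a / 2) = 1 / 2 + 1 / 2 ^ (2 * r + 2) ∧ F (a / 2) < 2 / 3 ∧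
    ¬ ∃ (Ω : Type) (_ : MeasurableSpace Ω) (μ : Measure Ω) (_ : IsProbabilityMeasure μ)
        (X : Fin 3 → Ω → ℝ) (C : ℝ),
        (∀ i, Measurable (X i)) ∧
        (∀ i x, μ {ω | X i ω ≤ x} = ENNReal.ofReal (F x)) ∧
        μ {ω | ∑ i, X i ω = C} = 1 := by
  have hapow : (0:ℝ) < a ^ (2*r+1) := pow_pos ha _
  have h2pow : (0:ℝ) < 2 ^ (2*r+1) := by positivity
  have hFval : F (a/2) = 1/2 + 1/2^(2*r+2) := by
    rw [hF, if_neg (by linarith), if_pos (by linarith)]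
    rw [div_pow, show 2*r+2 = (2*r+1)+1 from rfl, pow_succ]
    field_simp
    ring
  have h16 : (16:ℝ) ≤ 2 ^ (2*r+2) := by
    calc (16:ℝ) = 2^4 := by norm_num
    _ ≤ 2^(2*r+2) := pow_le_pow_right₀ (by norm_num) (by omega)
  have hsmall : (1:ℝ)/2^(2*r+2) ≤ 1/16 := one_div_le_one_div_of_le (by norm_num) h16
  have h2r2pos : (0:ℝ) < 2^(2*r+2) := by positivity
  have hsmallpos : (0:ℝ) < 1/2^(2*r+2) := by positivity
  have hlt : F (a/2) < 2/3 := by rw [hFval]; linarith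
  refine ⟨hFval, hlt, ?_⟩
  rintro ⟨Ω, mΩ, μ, hprob, X, C, hmeas, hcdf, hSum⟩
  -- value of F at -a/2
  have hFnval : F (-a/2) = 1/2 - 1/2^(2*r+2) := by
    rw [hF, if_neg (by linarith), if_pos (by linarith)]
    have hodd : Odd (2*r+1) := ⟨r, by ring⟩
    rw [show (-a/2 : ℝ) = -(a/2) from by ring, hodd.neg_pow, div_pow,
      show 2*r+2 = (2*r+1)+1 from rfl, pow_succ]
    field_simp
    ring
  have hFa : F a = 1 := by
    rw [hF, if_neg (by linarith), if_neg (lt_irrefl a)]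
  -- null sets above a and below -a
  have hub : ∀ i, μ {ω | a < X i ω} = 0 := by
    intro i
    have hc : {ω | a < X i ω} = {ω | X i ω ≤ a}ᶜ := by
      ext ω; simp [not_le]
    rw [hc, prob_compl_eq_one_sub (measurableSet_le (hmeas i) measurable_const),
      hcdf i a, hFa, ENNReal.ofReal_one, tsub_self]
  have hlb : ∀ i, μ {ω | X i ω < -a} = 0 := by
    intro i
    have hsub : {ω | X i ω < -a} ⊆ ⋃ n : ℕ, {ω | X i ω ≤ -a - 1/((n:ℝ)+1)} := by
      intro ω hω
      obtain ⟨n, hn⟩ := exists_nat_one_div_lt (show (0:ℝ) < -a - X i ω by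
        simp only [Set.mem_setOf_eq] at hω; linarith)
      exact Set.mem_iUnion.2 ⟨n, by simp only [Set.mem_setOf_eq]; linarith⟩
    have hzero : ∀ n : ℕ, μ {ω | X i ω ≤ -a - 1/((n:ℝ)+1)} = 0 := by
      intro n
      rw [hcdf, hF, if_pos (by
        have : (0:ℝ) < 1/((n:ℝ)+1) := by positivity
        linarith), ENNReal.ofReal_zero]
    refine le_antisymm (le_trans (measure_mono hsub) (le_trans (measure_iUnion_le _) ?_))
      (zero_le)
    have htsum : ∑' n : ℕ, μ {ω | X i ω ≤ -a - 1/((n:ℝ)+1)} = 0 := by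
      simp only [ENNReal.tsum_eq_zero]; exact hzero
    rw [htsum]
  -- measures of the key events
  have hq0 : (0:ℝ) ≤ 1 - (1/2 + 1/2^(2*r+2)) := by linarith
  have hA : ∀ i, μ {ω | a/2 < X i ω} = ENNReal.ofReal (1 - (1/2 + 1/2^(2*r+2))) := by
    intro i
    have hc : {ω | a/2 < X i ω} = {ω | X i ω ≤ a/2}ᶜ := by
      ext ω; simp [not_le]
    rw [hc, prob_compl_eq_one_sub (measurableSet_le (hmeas i) measurable_const),
      hcdf i (a/2), hFval, ← ENNReal.ofReal_one,
      ← ENNReal.ofReal_sub _ (by linarith)]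
  have hB : ∀ i, μ {ω | X i ω ≤ -a/2} = ENNReal.ofReal (1 - (1/2 + 1/2^(2*r+2))) := by
    intro i
    rw [hcdf i (-a/2), hFnval]
    congr 1
    ring
  have hgt : (1:ENNReal) < ENNReal.ofReal (1 - (1/2 + 1/2^(2*r+2))) +
      ENNReal.ofReal (1 - (1/2 + 1/2^(2*r+2))) +
      ENNReal.ofReal (1 - (1/2 + 1/2^(2*r+2))) := by
    rw [← ENNReal.ofReal_add hq0 hq0, ← ENNReal.ofReal_add (by linarith) hq0]
    exact ENNReal.one_lt_ofReal.2 (by linarith)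
  -- the a.s. sum event
  have hmsum : MeasurableSet {ω | ∑ i, X i ω = C} := by
    have hm : Measurable fun ω => ∑ i, X i ω :=
      Finset.measurable_sum _ (fun i _ => hmeas i)
    exact measurableSet_eq_fun hm measurable_const
  have hTc : μ {ω | ∑ i, X i ω = C}ᶜ = 0 := by
    rw [prob_compl_eq_one_sub hmsum, hSum, tsub_self]
  have hT : μ {ω | X 0 ω + X 1 ω + X 2 ω = C}ᶜ = 0 := by
    have he : {ω | X 0 ω + X 1 ω + X 2 ω = C} = {ω | ∑ i, X i ω = C} := by
      ext ω; simp [Fin.sum_univ_three]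
    rw [he]; exact hTc
  have hTperm : ∀ i j k : Fin 3, (∀ ω, X i ω + X j ω + X k ω = X 0 ω + X 1 ω + X 2 ω) →
      μ {ω | X i ω + X j ω + X k ω = C}ᶜ = 0 := by
    intro i j k hperm
    have he : {ω | X i ω + X j ω + X k ω = C} = {ω | X 0 ω + X 1 ω + X 2 ω = C} := by
      ext ω; simp only [Set.mem_setOf_eq, hperm ω]
    rw [he]; exact hT
  -- C > 0 from the A events
  have hCpos : 0 < C := by
    have hApair := pairPos' μ {ω | a/2 < X 0 ω} {ω | a/2 < X 1 ω} {ω | a/2 < X 2 ω}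
      (measurableSet_lt measurable_const (hmeas 1))
      (measurableSet_lt measurable_const (hmeas 2))
      (by rw [hA 0, hA 1, hA 2]; exact hgt)
    rcases hApair with h | h | h
    · exact keyA' h (hlb 2) hT
    · exact keyA' h (hlb 1) (hTperm 0 2 1 (fun ω => by ring))
    · exact keyA' h (hlb 0) (hTperm 1 2 0 (fun ω => by ring))
  -- C ≤ 0 from the B events
  have hCnonpos : C ≤ 0 := by
    have hBpair := pairPos' μ {ω | X 0 ω ≤ -a/2} {ω | X 1 ω ≤ -a/2} {ω | X 2 ω ≤ -a/2}
      (measurableSet_le (hmeas 1) measurable_const)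
      (measurableSet_le (hmeas 2) measurable_const)
      (by rw [hB 0, hB 1, hB 2]; exact hgt)
    rcases hBpair with h | h | h
    · exact keyB' h (hub 2) hT
    · exact keyB' h (hub 1) (hTperm 0 2 1 (fun ω => by ring))
    · exact keyB' h (hub 0) (hTperm 1 2 0 (fun ω => by ring))
  linarith
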